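/- arXiv:1307.6535 — 2 statements merged into one kernel-verified Lean document; each statement's English description precedes it below -/
import Mathlib

section
/- Let Z be a connected topological space with no cut point, and let O' be a subset of Z such that both O' and Z \ O' contain at least two points. Then the topological boundary of O' contains at least two points. -/
theorem boundary_nontrivial_of_no_cut_point
    {Z : Type*} [TopologicalSpace Z] [ConnectedSpace Z]
    (hnc : ∀ c : Z, IsPreconnected ({c}ᶜ : Set Z))
    (O' : Set Z) (hO : O'.Nontrivial) (hOc : O'ᶜ.Nontrivial) :
    (frontier O').Nontrivial := by
  by_contra h
  rw [Set.not_nontrivial_iff] at h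
  have hne : Nonempty Z := inferInstance
  obtain ⟨c, hc⟩ : ∃ c : Z, frontier O' ⊆ {c} := by
    rcases (frontier O').eq_empty_or_nonempty with he | ⟨c, hc⟩
    · exact ⟨Classical.arbitrary Z, by simp [he]⟩
    · exact ⟨c, fun x hx => h hx hc⟩
  have hclO : closure O' ⊆ interior O' ∪ {c} := by
    rw [closure_eq_interior_union_frontier]
    exact Set.union_subset_union subset_rfl hc
  have hclOc : closure O'ᶜ ⊆ interior O'ᶜ ∪ {c} := by
    rw [closure_eq_interior_union_frontier, frontier_compl]
    exact Set.union_subset_union subset_rfl hc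
  have hcover : ({c}ᶜ : Set Z) ⊆ interior O' ∪ interior O'ᶜ := by
    intro x hx
    by_cases hxO : x ∈ O'
    · rcases hclO (subset_closure hxO) with h1 | h1
      · exact Or.inl h1
      · exact absurd h1 hx
    · rcases hclOc (subset_closure hxO) with h1 | h1
      · exact Or.inr h1
      · exact absurd h1 hx
  have hu : (({c}ᶜ : Set Z) ∩ interior O').Nonempty := by
    obtain ⟨a, ha, b, hb, hab⟩ := hO
    obtain ⟨x, hxO, hxc⟩ : ∃ x, x ∈ O' ∧ x ≠ c := by
      by_cases hac : a = c
      · exact ⟨b, hb, fun hbc => hab (by rw [hac, hbc])⟩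
      · exact ⟨a, ha, hac⟩
    refine ⟨x, hxc, ?_⟩
    rcases hclO (subset_closure hxO) with h1 | h1
    · exact h1
    · exact absurd h1 hxc
  have hv : (({c}ᶜ : Set Z) ∩ interior O'ᶜ).Nonempty := by
    obtain ⟨a, ha, b, hb, hab⟩ := hOc
    obtain ⟨x, hxO, hxc⟩ : ∃ x, x ∈ O'ᶜ ∧ x ≠ c := by
      by_cases hac : a = c
      · exact ⟨b, hb, fun hbc => hab (by rw [hac, hbc])⟩
      · exact ⟨a, ha, hac⟩
    refine ⟨x, hxc, ?_⟩
    rcases hclOc (subset_closure hxO) with h1 | h1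
    · exact h1
    · exact absurd h1 hxc
  obtain ⟨x, -, hx1, hx2⟩ := hnc c (interior O') (interior O'ᶜ)
    isOpen_interior isOpen_interior hcover hu hv
  exact (interior_subset hx2) (interior_subset hx1)
end

section
/- Two annuli A(r₁, R₁) = {z : r₁ < |z| < R₁} and A(r₂, R₂) = {z : r₂ < |z| < R₂} with 0 < rᵢ < Rᵢ < ∞ are conformally equivalent (i.e., there exists a bijective holomorphic map between them) only if R₁/r₁ = R₂/r₂. -/
open Complex Set

noncomputable section AnnulusProof

def ann (r R : ℝ) : Set ℂ := {z : ℂ | r < ‖z‖ ∧ ‖z‖ < R}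

lemma isOpen_ann (r R : ℝ) : IsOpen (ann r R) :=
  (isOpen_lt continuous_const continuous_norm).inter
    (isOpen_lt continuous_norm continuous_const)

lemma ann_eq_image {r R : ℝ} (hr : 0 ≤ r) :
    ann r R = (fun p : ℝ × ℝ => (p.1 : ℂ) * Complex.exp (p.2 * I)) '' (Ioo r R ×ˢ univ) := by
  ext z
  constructor
  · rintro ⟨h1, h2⟩
    exact ⟨(‖z‖, z.arg), ⟨⟨h1, h2⟩, trivial⟩, Complex.norm_mul_exp_arg_mul_I z⟩
  · rintro ⟨⟨ρ, θ⟩, ⟨⟨hρ1, hρ2⟩, -⟩, rfl⟩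
    have : ‖(ρ : ℂ) * Complex.exp (θ * I)‖ = ρ := by
      rw [norm_mul, Complex.norm_exp]
      simp [Complex.norm_of_nonneg (le_trans hr hρ1.le)]
      exact le_trans hr hρ1.le
    exact ⟨by rw [this]; exact hρ1, by rw [this]; exact hρ2⟩

lemma isPreconnected_ann {r R : ℝ} (hr : 0 ≤ r) : IsPreconnected (ann r R) := by
  rw [ann_eq_image hr]
  apply IsPreconnected.image
  · exact (isPreconnected_Ioo.prod isPreconnected_univ)
  · apply Continuous.continuousOn
    continuity

lemma ann_nonempty {r R : ℝ} (hr : 0 ≤ r) (hrR : r < R) : (ann r R).Nonempty := by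
  refine ⟨(((r + R) / 2 : ℝ) : ℂ), ?_, ?_⟩ <;>
    rw [Complex.norm_of_nonneg (by linarith : (0:ℝ) ≤ (r + R) / 2)] <;> linarith

lemma ann_nontrivial {r R : ℝ} (hr : 0 ≤ r) (hrR : r < R) :
    ∃ z w : ℂ, z ∈ ann r R ∧ w ∈ ann r R ∧ z ≠ w := by
  set m : ℝ := (r + R) / 2 with hm
  have hm0 : 0 < m := by rw [hm]; linarith
  have habs : ‖(m : ℂ)‖ = m := Complex.norm_of_nonneg hm0.le
  have h1 : (m : ℂ) ∈ ann r R := by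
    constructor <;> rw [habs] <;> simp [hm] <;> linarith
  have h2 : (-(m:ℂ)) ∈ ann r R := by
    have : ‖-(m:ℂ)‖ = m := by rw [norm_neg, habs]
    constructor <;> rw [this] <;> simp [hm] <;> linarith
  exact ⟨m, -m, h1, h2, by
    intro h
    have : (m:ℂ) = 0 := by linear_combination h / 2
    exact hm0.ne' (by exact_mod_cast this)⟩

variable {r₁ R₁ r₂ R₂ : ℝ} {f : ℂ → ℂ}

lemma f_isOpenMap (h₁ : 0 ≤ r₁) (h₂ : 0 ≤ r₂) (h₂' : r₂ < R₂)
    (hf : DifferentiableOn ℂ f (ann r₁ R₁))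
    (hbij : Set.BijOn f (ann r₁ R₁) (ann r₂ R₂)) :
    ∀ s ⊆ ann r₁ R₁, IsOpen s → IsOpen (f '' s) := by
  have han : AnalyticOnNhd ℂ f (ann r₁ R₁) := hf.analyticOnNhd (isOpen_ann _ _)
  rcases han.is_constant_or_isOpen (isPreconnected_ann h₁) with ⟨w, hw⟩ | h
  · exfalso
    obtain ⟨z, z', hz, hz', hne⟩ := ann_nontrivial h₂ h₂'
    obtain ⟨a, ha, rfl⟩ := hbij.surjOn hz
    obtain ⟨a', ha', rfl⟩ := hbij.surjOn hz'
    exact hne ((hw a ha).trans (hw a' ha').symm)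
  · exact h

lemma g_continuousOn (h₁ : 0 ≤ r₁) (h₂ : 0 ≤ r₂) (h₂' : r₂ < R₂)
    (hf : DifferentiableOn ℂ f (ann r₁ R₁))
    (hbij : Set.BijOn f (ann r₁ R₁) (ann r₂ R₂)) :
    ContinuousOn (Function.invFunOn f (ann r₁ R₁)) (ann r₂ R₂) := by
  set g := Function.invFunOn f (ann r₁ R₁) with hg
  have hinv : Set.InvOn g f (ann r₁ R₁) (ann r₂ R₂) := hbij.invOn_invFunOn
  have hgmaps : Set.MapsTo g (ann r₂ R₂) (ann r₁ R₁) := hbij.surjOn.mapsTo_invFunOn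
  rw [continuousOn_iff']
  intro t ht
  refine ⟨f '' (t ∩ ann r₁ R₁), f_isOpenMap h₁ h₂ h₂' hf hbij _ inter_subset_right
    (ht.inter (isOpen_ann _ _)), ?_⟩
  ext w
  constructor
  · rintro ⟨hwt, hw2⟩
    exact ⟨⟨g w, ⟨hwt, hgmaps hw2⟩, hinv.2 hw2⟩, hw2⟩
  · rintro ⟨⟨z, ⟨hzt, hz1⟩, rfl⟩, hw2⟩
    exact ⟨by rwa [mem_preimage, hinv.1 hz1], hw2⟩

/-- Preimages of interior circles stay away from the boundary. -/
lemma avoid (h₁ : 0 < r₁) (h₁' : r₁ < R₁) (h₂ : 0 < r₂) (h₂' : r₂ < R₂)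
    (hf : DifferentiableOn ℂ f (ann r₁ R₁))
    (hbij : Set.BijOn f (ann r₁ R₁) (ann r₂ R₂))
    {c : ℝ} (hc : r₂ < c) (hc' : c < R₂) :
    ∃ δ > 0, ∀ z ∈ ann r₁ R₁, ‖f z‖ = c →
      r₁ + δ ≤ ‖z‖ ∧ ‖z‖ ≤ R₁ - δ := by
  set g := Function.invFunOn f (ann r₁ R₁) with hgdef
  have hinv : Set.InvOn g f (ann r₁ R₁) (ann r₂ R₂) := hbij.invOn_invFunOn
  have hgmaps : Set.MapsTo g (ann r₂ R₂) (ann r₁ R₁) := hbij.surjOn.mapsTo_invFunOn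
  have hgc : ContinuousOn g (ann r₂ R₂) := g_continuousOn h₁.le h₂.le h₂' hf hbij
  have hsub : Metric.sphere (0:ℂ) c ⊆ ann r₂ R₂ := by
    intro w hw
    have : ‖w‖ = c := by simpa [Complex.dist_eq] using hw
    exact ⟨this ▸ hc, this ▸ hc'⟩
  set K := g '' Metric.sphere (0:ℂ) c with hK
  have hKc : IsCompact K := (isCompact_sphere 0 c).image_of_continuousOn (hgc.mono hsub)
  have hKsub : K ⊆ ann r₁ R₁ := by
    rintro _ ⟨w, hw, rfl⟩; exact hgmaps (hsub hw)
  have hKne : K.Nonempty := by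
    refine ⟨g (c:ℂ), (c:ℂ), ?_, rfl⟩
    have hc0 : (0:ℝ) ≤ c := (h₂.trans hc).le
    simp [Complex.dist_eq, Complex.norm_of_nonneg hc0, hc0]
  obtain ⟨zm, hzm, hmin⟩ := hKc.exists_isMinOn hKne (continuous_norm.continuousOn)
  obtain ⟨zM, hzM, hmax⟩ := hKc.exists_isMaxOn hKne (continuous_norm.continuousOn)
  refine ⟨min (‖zm‖ - r₁) (R₁ - ‖zM‖), ?_, ?_⟩
  · have h1 := (hKsub hzm).1
    have h2 := (hKsub hzM).2
    simp only [lt_min_iff]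
    constructor <;> linarith
  · intro z hz hfz
    have hfzmem : f z ∈ Metric.sphere (0:ℂ) c := by
      simp [Complex.dist_eq, hfz]
    have hzK : z ∈ K := ⟨f z, hfzmem, hinv.1 hz⟩
    have l1 : ‖zm‖ ≤ ‖z‖ := hmin hzK
    have l2 : ‖z‖ ≤ ‖zM‖ := hmax hzK
    constructor
    · calc r₁ + min (‖zm‖ - r₁) (R₁ - ‖zM‖)
          ≤ r₁ + (‖zm‖ - r₁) := by
            exact add_le_add_right (min_le_left _ _) _
        _ = ‖zm‖ := by ring
        _ ≤ ‖z‖ := l1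
    · calc ‖z‖ ≤ ‖zM‖ := l2
        _ = R₁ - (R₁ - ‖zM‖) := by ring
        _ ≤ R₁ - min (‖zm‖ - r₁) (R₁ - ‖zM‖) := by
            have := min_le_right (‖zm‖ - r₁) (R₁ - ‖zM‖)
            linarith

/-- A preconnected subset avoiding the circle of radius `c` maps to one side. -/
lemma side {S : Set ℂ} (hS : IsPreconnected S) (hSsub : S ⊆ ann r₁ R₁)
    (hfc : ContinuousOn f (ann r₁ R₁)) {c : ℝ}
    (havoid : ∀ z ∈ S, ‖f z‖ ≠ c) :
    (∀ z ∈ S, ‖f z‖ < c) ∨ (∀ z ∈ S, c < ‖f z‖) := by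
  have himg : IsPreconnected (f '' S) := hS.image f (hfc.mono hSsub)
  have hcover : f '' S ⊆ {w : ℂ | ‖w‖ < c} ∪ {w : ℂ | c < ‖w‖} := by
    rintro _ ⟨z, hz, rfl⟩
    rcases lt_or_gt_of_ne (havoid z hz) with h | h
    · exact Or.inl h
    · exact Or.inr h
  have hdisj : Disjoint {w : ℂ | ‖w‖ < c} {w : ℂ | c < ‖w‖} := by
    rw [Set.disjoint_iff]
    rintro w ⟨hw1, hw2⟩
    simp only [mem_setOf_eq] at hw1 hw2
    exact absurd hw2 (not_lt.mpr hw1.le)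
  rcases himg.subset_or_subset (isOpen_lt continuous_norm continuous_const)
      (isOpen_lt continuous_const continuous_norm) hdisj hcover with h | h
  · exact Or.inl fun z hz => h ⟨z, hz, rfl⟩
  · exact Or.inr fun z hz => h ⟨z, hz, rfl⟩

/-- There are points near the boundary whose image has small modulus. -/
lemma escape_le (h₁ : 0 < r₁) (h₁' : r₁ < R₁) (h₂ : 0 < r₂) (h₂' : r₂ < R₂)
    (hf : DifferentiableOn ℂ f (ann r₁ R₁))
    (hbij : Set.BijOn f (ann r₁ R₁) (ann r₂ R₂))
    {c δ : ℝ} (hc : r₂ < c) (hc' : c < R₂) (hδ : 0 < δ) :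
    ∃ z ∈ ann r₁ R₁, ‖f z‖ ≤ c ∧
      (‖z‖ < r₁ + δ ∨ R₁ - δ < ‖z‖) := by
  by_contra hcon
  push_neg at hcon
  set K := ((fun z : ℂ => ‖z‖) ⁻¹' Icc (r₁ + δ) (R₁ - δ)) with hKdef
  have hKcpt : IsCompact K := by
    have h1 : IsClosed K := isClosed_Icc.preimage continuous_norm
    have h2 : Bornology.IsBounded K := by
      apply (Metric.isBounded_closedBall (x := (0:ℂ)) (r := R₁)).subset
      intro z hz
      simp only [Metric.mem_closedBall, Complex.dist_eq, sub_zero]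
      exact le_trans hz.2 (by linarith)
    exact Metric.isCompact_of_isClosed_isBounded h1 h2
  have hKsub : K ⊆ ann r₁ R₁ := fun z hz => ⟨by linarith [hz.1], by linarith [hz.2]⟩
  set T := K ∩ (fun z => ‖f z‖) ⁻¹' Iic c with hTdef
  have hTcpt : IsCompact T := by
    have hcont : ContinuousOn (fun z => ‖f z‖) K :=
      continuous_norm.comp_continuousOn (hf.continuousOn.mono hKsub)
    exact hKcpt.of_isClosed_subset
      (hcont.preimage_isClosed_of_isClosed hKcpt.isClosed isClosed_Iic) inter_subset_left
  have himgcpt : IsCompact (f '' T) :=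
    hTcpt.image_of_continuousOn (hf.continuousOn.mono (inter_subset_left.trans hKsub))
  have himgsub : f '' T ⊆ ann r₂ R₂ := by
    rintro _ ⟨z, hz, rfl⟩; exact hbij.mapsTo (hKsub hz.1)
  -- the whole inner part of the target annulus is in `f '' T`
  have hin : ∀ w ∈ ann r₂ R₂, ‖w‖ ≤ c → w ∈ f '' T := by
    intro w hw hwc
    set g := Function.invFunOn f (ann r₁ R₁) with hgdef
    have hinv : Set.InvOn g f (ann r₁ R₁) (ann r₂ R₂) := hbij.invOn_invFunOn
    have hgmaps : Set.MapsTo g (ann r₂ R₂) (ann r₁ R₁) := hbij.surjOn.mapsTo_invFunOn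
    have hz1 : g w ∈ ann r₁ R₁ := hgmaps hw
    have hz2 : f (g w) = w := hinv.2 hw
    have hz3 : ‖f (g w)‖ ≤ c := by rw [hz2]; exact hwc
    have h4 := hcon (g w) hz1 hz3
    exact ⟨g w, ⟨⟨h4.1, h4.2⟩, hz3⟩, hz2⟩
  -- but `f '' T` is closed and misses `r₂`, contradiction with a sequence tending to `r₂`
  have hseq : Filter.Tendsto (fun n : ℕ => ((r₂ + (c - r₂) / (n + 2) : ℝ) : ℂ))
      Filter.atTop (nhds ((r₂ : ℝ) : ℂ)) := by
    rw [show ((r₂ : ℝ) : ℂ) = ((r₂ + 0 : ℝ) : ℂ) by norm_num]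
    apply Filter.Tendsto.comp (Complex.continuous_ofReal.tendsto _)
    apply Filter.Tendsto.const_add
    apply Filter.Tendsto.div_atTop (tendsto_const_nhds)
    apply Filter.tendsto_atTop_add_const_right
    exact tendsto_natCast_atTop_atTop
  have hmem : ∀ n : ℕ, ((r₂ + (c - r₂) / (n + 2) : ℝ) : ℂ) ∈ f '' T := by
    intro n
    have hpos : (0:ℝ) < (c - r₂) / (n + 2) := div_pos (by linarith) (by positivity)
    have hle : (c - r₂) / (n + 2) ≤ (c - r₂) / 2 := by
      apply div_le_div_of_nonneg_left (by linarith) (by norm_num) (by push_cast; linarith)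
    have habs : ‖((r₂ + (c - r₂) / (n + 2) : ℝ) : ℂ)‖
        = r₂ + (c - r₂) / (n + 2) := Complex.norm_of_nonneg (by linarith)
    apply hin
    · exact ⟨by rw [habs]; linarith, by rw [habs]; linarith⟩
    · rw [habs]; linarith
  have hlim : ((r₂ : ℝ) : ℂ) ∈ f '' T :=
    himgcpt.isClosed.mem_of_tendsto hseq (Filter.Eventually.of_forall hmem)
  have : ((r₂ : ℝ) : ℂ) ∈ ann r₂ R₂ := himgsub hlim
  have habs : ‖((r₂ : ℝ) : ℂ)‖ = r₂ := Complex.norm_of_nonneg h₂.le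
  exact absurd (habs ▸ this.1) (lt_irrefl _)

/-- There are points near the boundary whose image has large modulus. -/
lemma escape_ge (h₁ : 0 < r₁) (h₁' : r₁ < R₁) (h₂ : 0 < r₂) (h₂' : r₂ < R₂)
    (hf : DifferentiableOn ℂ f (ann r₁ R₁))
    (hbij : Set.BijOn f (ann r₁ R₁) (ann r₂ R₂))
    {c δ : ℝ} (hc : r₂ < c) (hc' : c < R₂) (hδ : 0 < δ) :
    ∃ z ∈ ann r₁ R₁, c ≤ ‖f z‖ ∧
      (‖z‖ < r₁ + δ ∨ R₁ - δ < ‖z‖) := by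
  by_contra hcon
  push_neg at hcon
  set K := ((fun z : ℂ => ‖z‖) ⁻¹' Icc (r₁ + δ) (R₁ - δ)) with hKdef
  have hKcpt : IsCompact K := by
    have h1 : IsClosed K := isClosed_Icc.preimage continuous_norm
    have h2 : Bornology.IsBounded K := by
      apply (Metric.isBounded_closedBall (x := (0:ℂ)) (r := R₁)).subset
      intro z hz
      simp only [Metric.mem_closedBall, Complex.dist_eq, sub_zero]
      exact le_trans hz.2 (by linarith)
    exact Metric.isCompact_of_isClosed_isBounded h1 h2
  have hKsub : K ⊆ ann r₁ R₁ := fun z hz => ⟨by linarith [hz.1], by linarith [hz.2]⟩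
  set T := K ∩ (fun z => ‖f z‖) ⁻¹' Ici c with hTdef
  have hTcpt : IsCompact T := by
    have hcont : ContinuousOn (fun z => ‖f z‖) K :=
      continuous_norm.comp_continuousOn (hf.continuousOn.mono hKsub)
    exact hKcpt.of_isClosed_subset
      (hcont.preimage_isClosed_of_isClosed hKcpt.isClosed isClosed_Ici) inter_subset_left
  have himgcpt : IsCompact (f '' T) :=
    hTcpt.image_of_continuousOn (hf.continuousOn.mono (inter_subset_left.trans hKsub))
  have himgsub : f '' T ⊆ ann r₂ R₂ := by
    rintro _ ⟨z, hz, rfl⟩; exact hbij.mapsTo (hKsub hz.1)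
  have hin : ∀ w ∈ ann r₂ R₂, c ≤ ‖w‖ → w ∈ f '' T := by
    intro w hw hwc
    set g := Function.invFunOn f (ann r₁ R₁) with hgdef
    have hinv : Set.InvOn g f (ann r₁ R₁) (ann r₂ R₂) := hbij.invOn_invFunOn
    have hgmaps : Set.MapsTo g (ann r₂ R₂) (ann r₁ R₁) := hbij.surjOn.mapsTo_invFunOn
    have hz1 : g w ∈ ann r₁ R₁ := hgmaps hw
    have hz2 : f (g w) = w := hinv.2 hw
    have hz3 : c ≤ ‖f (g w)‖ := by rw [hz2]; exact hwc
    have h4 := hcon (g w) hz1 hz3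
    exact ⟨g w, ⟨⟨h4.1, h4.2⟩, hz3⟩, hz2⟩
  have hseq : Filter.Tendsto (fun n : ℕ => ((R₂ - (R₂ - c) / (n + 2) : ℝ) : ℂ))
      Filter.atTop (nhds ((R₂ : ℝ) : ℂ)) := by
    rw [show ((R₂ : ℝ) : ℂ) = ((R₂ - 0 : ℝ) : ℂ) by norm_num]
    apply Filter.Tendsto.comp (Complex.continuous_ofReal.tendsto _)
    apply Filter.Tendsto.const_sub
    apply Filter.Tendsto.div_atTop (tendsto_const_nhds)
    apply Filter.tendsto_atTop_add_const_right
    exact tendsto_natCast_atTop_atTop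
  have hmem : ∀ n : ℕ, ((R₂ - (R₂ - c) / (n + 2) : ℝ) : ℂ) ∈ f '' T := by
    intro n
    have hpos : (0:ℝ) < (R₂ - c) / (n + 2) := div_pos (by linarith) (by positivity)
    have hle : (R₂ - c) / (n + 2) ≤ (R₂ - c) / 2 := by
      apply div_le_div_of_nonneg_left (by linarith) (by norm_num) (by push_cast; linarith)
    have habs : ‖((R₂ - (R₂ - c) / (n + 2) : ℝ) : ℂ)‖
        = R₂ - (R₂ - c) / (n + 2) := Complex.norm_of_nonneg (by linarith)
    apply hin
    · exact ⟨by rw [habs]; linarith, by rw [habs]; linarith⟩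
    · rw [habs]; linarith
  have hlim : ((R₂ : ℝ) : ℂ) ∈ f '' T :=
    himgcpt.isClosed.mem_of_tendsto hseq (Filter.Eventually.of_forall hmem)
  have : ((R₂ : ℝ) : ℂ) ∈ ann r₂ R₂ := himgsub hlim
  have habs : ‖((R₂ : ℝ) : ℂ)‖ = R₂ := Complex.norm_of_nonneg (by linarith)
  exact absurd (habs ▸ this.2) (lt_irrefl _)

/-- Main boundary behaviour lemma, assuming the inner boundary maps to the inner boundary. -/
lemma boundary_bounds (h₁ : 0 < r₁) (h₁' : r₁ < R₁) (h₂ : 0 < r₂) (h₂' : r₂ < R₂)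
    (hf : DifferentiableOn ℂ f (ann r₁ R₁))
    (hbij : Set.BijOn f (ann r₁ R₁) (ann r₂ R₂))
    {δ₀ : ℝ} (hδ₀ : 0 < δ₀)
    (hcaseA : ∀ z ∈ ann r₁ R₁, ‖z‖ < r₁ + δ₀ →
      ‖f z‖ < (r₂ + R₂) / 2)
    {c : ℝ} (hc : r₂ < c) (hc' : c < R₂) :
    ∃ δ > 0, ∀ z ∈ ann r₁ R₁,
      (‖z‖ < r₁ + δ → ‖f z‖ < c) ∧
      (R₁ - δ < ‖z‖ → c < ‖f z‖) := by
  set c₀ : ℝ := (r₂ + R₂) / 2 with hc₀def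
  have hc₀1 : r₂ < c₀ := by rw [hc₀def]; linarith
  have hc₀2 : c₀ < R₂ := by rw [hc₀def]; linarith
  obtain ⟨δc, hδc, hδcav⟩ := avoid h₁ h₁' h₂ h₂' hf hbij hc hc'
  obtain ⟨δc₀, hδc₀, hδc₀av⟩ := avoid h₁ h₁' h₂ h₂' hf hbij hc₀1 hc₀2
  set δ : ℝ := min (min δc δc₀) (min δ₀ ((R₁ - r₁) / 2)) with hδdef
  have hδpos : 0 < δ := by
    apply lt_min (lt_min hδc hδc₀) (lt_min hδ₀ (by linarith))
  have hδle1 : δ ≤ δc := le_trans (min_le_left _ _) (min_le_left _ _)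
  have hδle2 : δ ≤ δc₀ := le_trans (min_le_left _ _) (min_le_right _ _)
  have hδle3 : δ ≤ δ₀ := le_trans (min_le_right _ _) (min_le_left _ _)
  have hδle4 : δ ≤ (R₁ - r₁) / 2 := le_trans (min_le_right _ _) (min_le_right _ _)
  set S : Set ℂ := ann r₁ (r₁ + δ) with hSdef
  set S' : Set ℂ := ann (R₁ - δ) R₁ with hS'def
  have hSsub : S ⊆ ann r₁ R₁ := fun z hz => ⟨hz.1, by have := hz.2; linarith⟩
  have hS'sub : S' ⊆ ann r₁ R₁ := fun z hz => ⟨by have := hz.1; linarith, hz.2⟩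
  have hSne : S.Nonempty := ann_nonempty h₁.le (by linarith)
  have hS'ne : S'.Nonempty := ann_nonempty (by linarith) (by linarith)
  -- membership characterizations
  have hmemS : ∀ z ∈ ann r₁ R₁, ‖z‖ < r₁ + δ → z ∈ S :=
    fun z hz h => ⟨hz.1, h⟩
  have hmemS' : ∀ z ∈ ann r₁ R₁, R₁ - δ < ‖z‖ → z ∈ S' :=
    fun z hz h => ⟨h, hz.2⟩
  -- S avoids circles c, c₀ ; S' likewise
  have hSav : ∀ z ∈ S, ‖f z‖ ≠ c := by
    intro z hz heq
    have := (hδcav z (hSsub hz) heq).1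
    have h2 := hz.2
    linarith
  have hSav₀ : ∀ z ∈ S, ‖f z‖ ≠ c₀ := by
    intro z hz heq
    have := (hδc₀av z (hSsub hz) heq).1
    have h2 := hz.2
    linarith
  have hS'av : ∀ z ∈ S', ‖f z‖ ≠ c := by
    intro z hz heq
    have := (hδcav z (hS'sub hz) heq).2
    have h2 := hz.1
    linarith
  have hS'av₀ : ∀ z ∈ S', ‖f z‖ ≠ c₀ := by
    intro z hz heq
    have := (hδc₀av z (hS'sub hz) heq).2
    have h2 := hz.1
    linarith
  -- caseA: on S, |f| < c₀
  have hS₀ : ∀ z ∈ S, ‖f z‖ < c₀ := by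
    intro z hz
    exact hcaseA z (hSsub hz) (by have := hz.2; linarith)
  -- S' maps above c₀
  have hS'₀ : ∀ z ∈ S', c₀ < ‖f z‖ := by
    rcases side (isPreconnected_ann (by linarith)) hS'sub hf.continuousOn hS'av₀ with h | h
    · exfalso
      obtain ⟨z, hz, hz2, hz3⟩ := escape_ge h₁ h₁' h₂ h₂' hf hbij hc₀1 hc₀2 hδpos
      rcases hz3 with h3 | h3
      · exact absurd hz2 (not_le.mpr (hS₀ z (hmemS z hz h3)))
      · exact absurd hz2 (not_le.mpr (h z (hmemS' z hz h3)))
    · exact h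
  -- S maps below c
  have hSc : ∀ z ∈ S, ‖f z‖ < c := by
    rcases side (isPreconnected_ann h₁.le) hSsub hf.continuousOn hSav with h | h
    · exact h
    · exfalso
      rcases le_or_gt c c₀ with hcc | hcc
      · obtain ⟨z, hz, hz2, hz3⟩ := escape_le h₁ h₁' h₂ h₂' hf hbij hc hc' hδpos
        rcases hz3 with h3 | h3
        · exact absurd hz2 (not_le.mpr (h z (hmemS z hz h3)))
        · exact absurd hz2 (not_le.mpr (lt_of_le_of_lt hcc (hS'₀ z (hmemS' z hz h3))))
      · obtain ⟨z, hz⟩ := hSne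
        have := hS₀ z hz
        have := h z hz
        linarith
  -- S' maps above c
  have hS'c : ∀ z ∈ S', c < ‖f z‖ := by
    rcases side (isPreconnected_ann (by linarith)) hS'sub hf.continuousOn hS'av with h | h
    · exfalso
      rcases le_or_gt c c₀ with hcc | hcc
      · obtain ⟨z, hz⟩ := hS'ne
        have := hS'₀ z hz
        have := h z hz
        linarith
      · obtain ⟨z, hz, hz2, hz3⟩ := escape_ge h₁ h₁' h₂ h₂' hf hbij hc hc' hδpos
        rcases hz3 with h3 | h3
        · exact absurd hz2 (not_le.mpr (hSc z (hmemS z hz h3)))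
        · exact absurd hz2 (not_le.mpr (h z (hmemS' z hz h3)))
    · exact h
  exact ⟨δ, hδpos, fun z hz =>
    ⟨fun h => hSc z (hmemS z hz h), fun h => hS'c z (hmemS' z hz h)⟩⟩

/-- Hadamard three-circles-type bound on a closed sub-annulus. -/
lemma hadamard_sub {r R : ℝ} {f : ℂ → ℂ} (hr : 0 < r) (hrR : r < R)
    (hf : DifferentiableOn ℂ f (ann r R))
    {B : ℝ} (hB : ∀ z ∈ ann r R, ‖f z‖ ≤ B)
    {x₀ x₁ a b : ℝ} (hx01 : x₀ < x₁) (hx0 : Real.log r < x₀) (hx1 : x₁ < Real.log R)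
    (ha : ∀ z ∈ ann r R, ‖z‖ = Real.exp x₀ → ‖f z‖ ≤ a)
    (hb : ∀ z ∈ ann r R, ‖z‖ = Real.exp x₁ → ‖f z‖ ≤ b)
    {z₀ : ℂ} (hz₀ : z₀ ∈ ann r R) (hz0l : x₀ ≤ Real.log (‖z₀‖))
    (hz0r : Real.log (‖z₀‖) ≤ x₁) :
    ‖f z₀‖ ≤
      a ^ (1 - (Real.log (‖z₀‖) - x₀) / (x₁ - x₀)) *
      b ^ ((Real.log (‖z₀‖) - x₀) / (x₁ - x₀)) := by
  set φ : ℂ → ℂ := fun w => Complex.exp ((x₀:ℂ) + w * ((x₁:ℂ) - (x₀:ℂ))) with hφdef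
  have habsφ : ∀ w : ℂ, ‖φ w‖ = Real.exp (x₀ + w.re * (x₁ - x₀)) := by
    intro w
    rw [hφdef, Complex.norm_exp]
    congr 1
    simp [Complex.add_re, Complex.mul_re, Complex.sub_re, Complex.ofReal_re,
      Complex.sub_im, Complex.ofReal_im]
  have hφmem : ∀ w : ℂ, 0 ≤ w.re → w.re ≤ 1 → φ w ∈ ann r R := by
    intro w h0 h1
    have he : x₀ + w.re * (x₁ - x₀) ∈ Icc x₀ x₁ := by
      constructor
      · nlinarith
      · nlinarith
    rw [ann, mem_setOf_eq, habsφ]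
    constructor
    · calc r = Real.exp (Real.log r) := (Real.exp_log hr).symm
        _ < Real.exp (x₀ + w.re * (x₁ - x₀)) := Real.exp_lt_exp.mpr (by linarith [he.1])
    · calc Real.exp (x₀ + w.re * (x₁ - x₀)) < Real.exp (Real.log R) :=
          Real.exp_lt_exp.mpr (by linarith [he.2])
        _ = R := Real.exp_log (hr.trans hrR)
  set F : ℂ → ℂ := fun w => f (φ w) with hFdef
  have hφdiff : Differentiable ℂ φ := by
    apply Complex.differentiable_exp.comp
    exact (differentiable_const _).add (differentiable_id.mul (differentiable_const _))
  have hFdiff : DifferentiableOn ℂ F (Complex.HadamardThreeLines.verticalClosedStrip 0 1) := by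
    intro w hw
    have hwmem : φ w ∈ ann r R := hφmem w hw.1 hw.2
    exact ((hf.differentiableAt ((isOpen_ann r R).mem_nhds hwmem)).comp w
      (hφdiff w)).differentiableWithinAt
  have hclos : closure (Complex.HadamardThreeLines.verticalStrip 0 1) ⊆
      Complex.HadamardThreeLines.verticalClosedStrip 0 1 := by
    apply closure_minimal
    · intro w hw
      exact ⟨(hw.1 : (0:ℝ) < w.re).le, (hw.2 : w.re < 1).le⟩
    · exact isClosed_Icc.preimage Complex.continuous_re
  have hdcc : DiffContOnCl ℂ F (Complex.HadamardThreeLines.verticalStrip 0 1) :=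
    (hFdiff.mono hclos).diffContOnCl
  have hBdd : BddAbove ((norm ∘ F) '' Complex.HadamardThreeLines.verticalClosedStrip 0 1) := by
    refine ⟨max B 0, ?_⟩
    rintro x ⟨w, hw, rfl⟩
    have : ‖f (φ w)‖ ≤ B := hB _ (hφmem w hw.1 hw.2)
    calc ‖F w‖ = ‖f (φ w)‖ := rfl
      _ ≤ B := this
      _ ≤ max B 0 := le_max_left _ _
  have hA : ∀ w ∈ Complex.re ⁻¹' {0}, ‖F w‖ ≤ a := by
    intro w hw
    have hw0 : w.re = 0 := hw
    have hmem : φ w ∈ ann r R := hφmem w (by rw [hw0]) (by rw [hw0]; norm_num)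
    have : ‖φ w‖ = Real.exp x₀ := by rw [habsφ, hw0]; ring_nf
    exact ha _ hmem this
  have hBb : ∀ w ∈ Complex.re ⁻¹' {1}, ‖F w‖ ≤ b := by
    intro w hw
    have hw1 : w.re = 1 := hw
    have hmem : φ w ∈ ann r R := hφmem w (by rw [hw1]; norm_num) (by rw [hw1])
    have : ‖φ w‖ = Real.exp x₁ := by rw [habsφ, hw1]; ring_nf
    exact hb _ hmem this
  -- the point in the strip corresponding to z₀
  have hz₀ne : z₀ ≠ 0 := by
    intro h
    rw [h] at hz₀
    simp [ann] at hz₀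
    linarith [hz₀.1, hr]
  set w₀ : ℂ := (Complex.log z₀ - (x₀:ℂ)) / ((x₁:ℂ) - (x₀:ℂ)) with hw₀def
  have hden : ((x₁:ℂ) - (x₀:ℂ)) ≠ 0 := by
    rw [← Complex.ofReal_sub]
    exact_mod_cast sub_ne_zero.mpr hx01.ne'
  have hφw₀ : φ w₀ = z₀ := by
    rw [hφdef]
    simp only [hw₀def]
    rw [div_mul_cancel₀ _ hden]
    rw [show (x₀:ℂ) + (Complex.log z₀ - (x₀:ℂ)) = Complex.log z₀ by ring]
    exact Complex.exp_log hz₀ne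
  have hw₀re : w₀.re = (Real.log (‖z₀‖) - x₀) / (x₁ - x₀) := by
    rw [hw₀def, ← Complex.ofReal_sub, Complex.div_ofReal_re, Complex.sub_re,
      Complex.log_re, Complex.ofReal_re]
  have hw₀mem : w₀ ∈ Complex.HadamardThreeLines.verticalClosedStrip 0 1 := by
    constructor
    · rw [hw₀re]
      apply div_nonneg (by linarith) (by linarith)
    · rw [hw₀re]
      rw [div_le_one (by linarith)]
      linarith
  have := Complex.HadamardThreeLines.norm_le_interp_of_mem_verticalClosedStrip₀₁'
    F hw₀mem hdcc hBdd hA hBb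
  rw [hw₀re] at this
  calc ‖f z₀‖ = ‖F w₀‖ := by rw [hFdef]; simp [hφw₀]
    _ ≤ _ := this

/-- Upper bound for the modulus via three-lines with boundary limsup control. -/
lemma modulus_upper {r R b₁ b₂ : ℝ} {f : ℂ → ℂ} (hr : 0 < r) (hrR : r < R)
    (hf : DifferentiableOn ℂ f (ann r R))
    {B : ℝ} (hB : ∀ z ∈ ann r R, ‖f z‖ ≤ B)
    (hb₁ : 0 < b₁) (hb₂ : 0 < b₂)
    (hbnd : ∀ ε : ℝ, 0 < ε → ∃ δ > 0, ∀ z ∈ ann r R,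
      (‖z‖ < r + δ → ‖f z‖ ≤ b₁ + ε) ∧
      (R - δ < ‖z‖ → ‖f z‖ ≤ b₂ + ε))
    {z₀ : ℂ} (hz₀ : z₀ ∈ ann r R) :
    ‖f z₀‖ ≤
      b₁ ^ (1 - (Real.log (‖z₀‖) - Real.log r) / (Real.log R - Real.log r)) *
      b₂ ^ ((Real.log (‖z₀‖) - Real.log r) / (Real.log R - Real.log r)) := by
  have habs0 : 0 < ‖z₀‖ := hr.trans hz₀.1
  set ℓ : ℝ := Real.log (‖z₀‖) with hℓdef
  set Lr : ℝ := Real.log r with hLrdef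
  set LR : ℝ := Real.log R with hLRdef
  have hℓ1 : Lr < ℓ := Real.log_lt_log hr hz₀.1
  have hℓ2 : ℓ < LR := Real.log_lt_log habs0 hz₀.2
  have hbnd' : ∀ n : ℕ, ∃ δ > 0, ∀ z ∈ ann r R,
      (‖z‖ < r + δ → ‖f z‖ ≤ b₁ + 1/(n+1)) ∧
      (R - δ < ‖z‖ → ‖f z‖ ≤ b₂ + 1/(n+1)) := by
    intro n
    exact hbnd (1/(n+1)) (by positivity)
  choose δ hδpos hδprop using hbnd'
  -- shrunk deltas
  set δ' : ℕ → ℝ := fun n => min (δ n) ((R - ‖z₀‖)/2) with hδ'def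
  have hδ'pos : ∀ n, 0 < δ' n := fun n => lt_min (hδpos n) (by have := hz₀.2; linarith)
  have hδ'le : ∀ n, δ' n ≤ δ n := fun n => min_le_left _ _
  have hδ'le2 : ∀ n, δ' n ≤ (R - ‖z₀‖)/2 := fun n => min_le_right _ _
  set u : ℕ → ℝ := fun n => min (Real.log (r + δ' n)) ℓ with hudef
  have hu : ∀ n, Lr < u n := fun n =>
    lt_min (Real.log_lt_log hr (by linarith [hδ'pos n])) hℓ1
  set x₀ : ℕ → ℝ := fun n => Lr + min ((u n - Lr)/2) (1/(n+1)) with hx₀def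
  set v : ℕ → ℝ := fun n => Real.log (R - δ' n) with hvdef
  have hv1 : ∀ n, ℓ ≤ v n := by
    intro n
    apply Real.log_le_log habs0
    have := hδ'le2 n
    have := hz₀.2
    linarith
  have hv2 : ∀ n, v n < LR := by
    intro n
    apply Real.log_lt_log
    · have := hδ'le2 n; have := hz₀.2; linarith
    · linarith [hδ'pos n]
  set x₁ : ℕ → ℝ := fun n => LR - min ((LR - v n)/2) (1/(n+1)) with hx₁def
  have hx₀lt : ∀ n, Lr < x₀ n := by
    intro n
    have h1 : (0:ℝ) < (u n - Lr)/2 := by linarith [hu n]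
    have h2 : (0:ℝ) < 1/((n:ℝ)+1) := by positivity
    simp only [hx₀def]
    have := lt_min h1 h2
    linarith
  have hx₀le : ∀ n, x₀ n < u n := by
    intro n
    have h1 : min ((u n - Lr)/2) (1/((n:ℝ)+1)) ≤ (u n - Lr)/2 := min_le_left _ _
    simp only [hx₀def]
    linarith [hu n]
  have hx₁gt : ∀ n, x₁ n < LR := by
    intro n
    have h1 : (0:ℝ) < (LR - v n)/2 := by linarith [hv2 n]
    have h2 : (0:ℝ) < 1/((n:ℝ)+1) := by positivity
    simp only [hx₁def]
    have := lt_min h1 h2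
    linarith
  have hx₁ge : ∀ n, v n < x₁ n := by
    intro n
    have h1 : min ((LR - v n)/2) (1/((n:ℝ)+1)) ≤ (LR - v n)/2 := min_le_left _ _
    simp only [hx₁def]
    linarith [hv2 n]
  have hx₀ℓ : ∀ n, x₀ n ≤ ℓ := fun n => le_trans (hx₀le n).le (min_le_right _ _)
  have hℓx₁ : ∀ n, ℓ ≤ x₁ n := fun n => le_trans (hv1 n) (hx₁ge n).le
  have hx01 : ∀ n, x₀ n < x₁ n := by
    intro n
    calc x₀ n < u n := hx₀le n
      _ ≤ ℓ := min_le_right _ _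
      _ ≤ v n := hv1 n
      _ < x₁ n := hx₁ge n
  set t : ℕ → ℝ := fun n => (ℓ - x₀ n) / (x₁ n - x₀ n) with htdef
  have key : ∀ n : ℕ, ‖f z₀‖ ≤
      (b₁ + 1/(n+1)) ^ (1 - t n) * (b₂ + 1/(n+1)) ^ (t n) := by
    intro n
    apply hadamard_sub hr hrR hf hB (hx01 n) (hx₀lt n) (hx₁gt n) ?_ ?_ hz₀ (hx₀ℓ n) (hℓx₁ n)
    · intro z hz hzea
      apply (hδprop n z hz).1
      have h1 : x₀ n < Real.log (r + δ' n) := lt_of_lt_of_le (hx₀le n) (min_le_left _ _)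
      have h2 : Real.exp (x₀ n) < r + δ' n := by
        calc Real.exp (x₀ n) < Real.exp (Real.log (r + δ' n)) := Real.exp_lt_exp.mpr h1
          _ = r + δ' n := Real.exp_log (by linarith [hδ'pos n])
      rw [hzea]
      linarith [hδ'le n]
    · intro z hz hzea
      apply (hδprop n z hz).2
      have h2 : R - δ' n < Real.exp (x₁ n) := by
        calc R - δ' n = Real.exp (v n) :=
            (Real.exp_log (by linarith [hδ'pos n, hv2 n, hδ'le2 n, hz₀.2])).symm
          _ < Real.exp (x₁ n) := Real.exp_lt_exp.mpr (hx₁ge n)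
      rw [hzea]
      linarith [hδ'le n]
  -- now take limits
  have hx₀tend : Filter.Tendsto x₀ Filter.atTop (nhds Lr) := by
    have hup : ∀ n : ℕ, x₀ n ≤ Lr + 1/(n+1) := by
      intro n
      simp only [hx₀def]
      linarith [min_le_right ((u n - Lr)/2) (1/((n:ℝ)+1))]
    have hlow : ∀ n : ℕ, Lr ≤ x₀ n := fun n => (hx₀lt n).le
    have htend : Filter.Tendsto (fun n : ℕ => Lr + 1/((n:ℝ)+1)) Filter.atTop (nhds Lr) := by
      have := tendsto_one_div_add_atTop_nhds_zero_nat.const_add Lr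
      simpa using this
    exact tendsto_of_tendsto_of_tendsto_of_le_of_le tendsto_const_nhds htend hlow hup
  have hx₁tend : Filter.Tendsto x₁ Filter.atTop (nhds LR) := by
    have hup : ∀ n : ℕ, LR - 1/(n+1) ≤ x₁ n := by
      intro n
      simp only [hx₁def]
      linarith [min_le_right ((LR - v n)/2) (1/((n:ℝ)+1))]
    have hlow : ∀ n : ℕ, x₁ n ≤ LR := fun n => (hx₁gt n).le
    have htend : Filter.Tendsto (fun n : ℕ => LR - 1/((n:ℝ)+1)) Filter.atTop (nhds LR) := by
      have := tendsto_one_div_add_atTop_nhds_zero_nat.const_sub LR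
      simpa using this
    exact tendsto_of_tendsto_of_tendsto_of_le_of_le htend tendsto_const_nhds hup hlow
  have httend : Filter.Tendsto t Filter.atTop (nhds ((ℓ - Lr) / (LR - Lr))) := by
    apply Filter.Tendsto.div
    · exact (tendsto_const_nhds).sub hx₀tend
    · exact hx₁tend.sub hx₀tend
    · intro h
      rw [sub_eq_zero] at h
      have : LR = Lr := h
      linarith
  have hεtend : Filter.Tendsto (fun n : ℕ => 1/((n:ℝ)+1)) Filter.atTop (nhds 0) :=
    tendsto_one_div_add_atTop_nhds_zero_nat
  have hrhs : Filter.Tendsto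
      (fun n : ℕ => (b₁ + 1/((n:ℝ)+1)) ^ (1 - t n) * (b₂ + 1/((n:ℝ)+1)) ^ (t n))
      Filter.atTop (nhds (b₁ ^ (1 - (ℓ - Lr) / (LR - Lr)) * b₂ ^ ((ℓ - Lr) / (LR - Lr)))) := by
    apply Filter.Tendsto.mul
    · apply Filter.Tendsto.rpow
      · have := hεtend.const_add b₁
        simpa using this
      · exact (tendsto_const_nhds).sub httend
      · left; positivity
    · apply Filter.Tendsto.rpow
      · have := hεtend.const_add b₂
        simpa using this
      · exact httend
      · left; positivity
  exact ge_of_tendsto hrhs (Filter.Eventually.of_forall key)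

/-- Exact modulus identity, assuming inner boundary goes to inner boundary. -/
lemma modulus_eq (h₁ : 0 < r₁) (h₁' : r₁ < R₁) (h₂ : 0 < r₂) (h₂' : r₂ < R₂)
    (hf : DifferentiableOn ℂ f (ann r₁ R₁))
    (hbij : Set.BijOn f (ann r₁ R₁) (ann r₂ R₂))
    {δ₀ : ℝ} (hδ₀ : 0 < δ₀)
    (hcaseA : ∀ z ∈ ann r₁ R₁, ‖z‖ < r₁ + δ₀ →
      ‖f z‖ < (r₂ + R₂) / 2) :
    ∀ z ∈ ann r₁ R₁, ‖f z‖ =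
      Real.exp (Real.log r₂ +
        ((Real.log R₂ - Real.log r₂) / (Real.log R₁ - Real.log r₁)) *
        (Real.log (‖z‖) - Real.log r₁)) := by
  intro z₀ hz₀
  have habs0 : 0 < ‖z₀‖ := h₁.trans hz₀.1
  have hL1 : Real.log r₁ < Real.log R₁ := Real.log_lt_log h₁ h₁'
  set t : ℝ := (Real.log (‖z₀‖) - Real.log r₁) / (Real.log R₁ - Real.log r₁)
    with htdef
  have hfz0 : ∀ z ∈ ann r₁ R₁, r₂ < ‖f z‖ ∧ ‖f z‖ < R₂ :=
    fun z hz => hbij.mapsTo hz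
  -- upper bound
  have hupper : ‖f z₀‖ ≤ r₂ ^ (1 - t) * R₂ ^ t := by
    apply modulus_upper h₁ h₁' hf (B := R₂) (fun z hz => (hfz0 z hz).2.le) h₂
      (h₂.trans h₂') ?_ hz₀
    intro ε hε
    set c : ℝ := min (r₂ + ε) ((r₂ + R₂)/2) with hcdef
    have hc1 : r₂ < c := lt_min (by linarith) (by linarith)
    have hc2 : c < R₂ := lt_of_le_of_lt (min_le_right _ _) (by linarith)
    obtain ⟨δ, hδpos, hδ⟩ := boundary_bounds h₁ h₁' h₂ h₂' hf hbij hδ₀ hcaseA hc1 hc2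
    refine ⟨δ, hδpos, fun z hz => ⟨fun h => ?_, fun _ => ?_⟩⟩
    · have h5 := (hδ z hz).1 h
      calc ‖f z‖ ≤ c := h5.le
        _ ≤ r₂ + ε := min_le_left _ _
    · linarith [(hfz0 z hz).2]
  -- lower bound via 1/f
  have hlower : r₂ ^ (1 - t) * R₂ ^ t ≤ ‖f z₀‖ := by
    have hfne : ∀ z ∈ ann r₁ R₁, f z ≠ 0 := by
      intro z hz h
      have := (hfz0 z hz).1
      rw [h] at this
      simp at this
      linarith
    have hinv_diff : DifferentiableOn ℂ (fun z => (f z)⁻¹) (ann r₁ R₁) :=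
      DifferentiableOn.inv hf hfne
    have hinvbound : ∀ z ∈ ann r₁ R₁, ‖(f z)⁻¹‖ ≤ r₂⁻¹ := by
      intro z hz
      rw [norm_inv]
      exact inv_anti₀ h₂ (hfz0 z hz).1.le
    have h2inv : (0:ℝ) < R₂⁻¹ := inv_pos.mpr (h₂.trans h₂')
    have h1inv : (0:ℝ) < r₂⁻¹ := inv_pos.mpr h₂
    have key := modulus_upper h₁ h₁' hinv_diff (B := r₂⁻¹) hinvbound h1inv h2inv ?_ hz₀
    · rw [norm_inv] at key
      have hpos : (0:ℝ) < r₂ ^ (1 - t) * R₂ ^ t := by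
        apply mul_pos (Real.rpow_pos_of_pos h₂ _) (Real.rpow_pos_of_pos (h₂.trans h₂') _)
      have hr : r₂⁻¹ ^ (1 - t) * R₂⁻¹ ^ t = (r₂ ^ (1 - t) * R₂ ^ t)⁻¹ := by
        rw [Real.inv_rpow h₂.le, Real.inv_rpow (h₂.trans h₂').le, mul_inv]
      rw [hr] at key
      have habsf : 0 < ‖f z₀‖ := h₂.trans (hfz0 z₀ hz₀).1
      rw [inv_le_inv₀ (by positivity) hpos] at key
      exact key
    · intro ε hε
      set c : ℝ := max (R₂⁻¹ + ε)⁻¹ ((r₂ + R₂)/2) with hcdef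
      have hcpos : (0:ℝ) < (R₂⁻¹ + ε)⁻¹ := inv_pos.mpr (add_pos h2inv hε)
      have hc1 : r₂ < c := lt_of_lt_of_le (by linarith) (le_max_right _ _)
      have hc2 : c < R₂ := by
        apply max_lt ?_ (by linarith)
        rw [inv_lt_comm₀ (by positivity) (h₂.trans h₂')]
        have : R₂⁻¹ < R₂⁻¹ + ε := by linarith
        linarith
      obtain ⟨δ, hδpos, hδ⟩ := boundary_bounds h₁ h₁' h₂ h₂' hf hbij hδ₀ hcaseA hc1 hc2
      refine ⟨δ, hδpos, fun z hz => ⟨fun _ => ?_, fun h => ?_⟩⟩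
      · rw [norm_inv]
        have := (hfz0 z hz).1
        have h' : r₂⁻¹ ≤ r₂⁻¹ + ε := by linarith
        exact le_trans (inv_anti₀ h₂ this.le) h'
      · rw [norm_inv]
        have hcf : c < ‖f z‖ := (hδ z hz).2 h
        have h3 : (R₂⁻¹ + ε)⁻¹ ≤ c := le_max_left _ _
        have h4 : (R₂⁻¹ + ε)⁻¹ < ‖f z‖ := lt_of_le_of_lt h3 hcf
        have h5 := inv_strictAnti₀ hcpos h4
        rw [inv_inv] at h5
        exact h5.le
  have heq := le_antisymm hupper hlower
  rw [heq]
  rw [Real.rpow_def_of_pos h₂, Real.rpow_def_of_pos (h₂.trans h₂'), ← Real.exp_add]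
  congr 1
  rw [htdef]
  field_simp
  ring

/-- From the exact modulus identity we get the logarithmic-derivative identity. -/
lemma deriv_identity (h₁ : 0 < r₁) (h₁' : r₁ < R₁) {s a : ℝ}
    (hf : DifferentiableOn ℂ f (ann r₁ R₁))
    (hfne : ∀ z ∈ ann r₁ R₁, f z ≠ 0)
    (hmod : ∀ z ∈ ann r₁ R₁, ‖f z‖ =
      Real.exp (a + s * Real.log (‖z‖))) :
    ∀ z₀ ∈ ann r₁ R₁, z₀ * deriv f z₀ = (s:ℂ) * f z₀ := by
  intro z₀ hz₀
  have hz₀abs : 0 < ‖z₀‖ := h₁.trans hz₀.1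
  have hz₀ne : z₀ ≠ 0 := by
    intro h; rw [h] at hz₀abs; simp at hz₀abs
  have hfz₀ne : f z₀ ≠ 0 := hfne z₀ hz₀
  have hfz₀abs : 0 < ‖f z₀‖ := by
    simpa [norm_pos_iff] using hfz₀ne
  have hfda : DifferentiableAt ℂ f z₀ :=
    hf.differentiableAt ((isOpen_ann r₁ R₁).mem_nhds hz₀)
  obtain ⟨ρ₁, hρ₁pos, hρ₁⟩ := Metric.isOpen_iff.mp (isOpen_ann r₁ R₁) z₀ hz₀
  obtain ⟨ρ₂, hρ₂pos, hρ₂⟩ := Metric.continuousAt_iff.mp hfda.continuousAt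
    (‖f z₀‖ / 2) (by positivity)
  set ρ : ℝ := min ρ₁ (min ρ₂ (‖z₀‖ / 2)) with hρdef
  have hρpos : 0 < ρ := lt_min hρ₁pos (lt_min hρ₂pos (by positivity))
  have hballann : Metric.ball z₀ ρ ⊆ ann r₁ R₁ :=
    (Metric.ball_subset_ball (min_le_left _ _)).trans hρ₁
  -- facts about points of the ball
  have hballfacts : ∀ z ∈ Metric.ball z₀ ρ, z ≠ 0 ∧
      z / z₀ ∈ Complex.slitPlane ∧ f z / f z₀ ∈ Complex.slitPlane := by
    intro z hz
    have hd1 : ‖z - z₀‖ < ‖z₀‖ / 2 := by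
      have := Metric.mem_ball.mp hz
      rw [Complex.dist_eq] at this
      calc ‖z - z₀‖ < ρ := this
        _ ≤ ‖z₀‖ / 2 := le_trans (min_le_right _ _) (min_le_right _ _)
    have hd2 : ‖f z - f z₀‖ < ‖f z₀‖ / 2 := by
      have hzρ₂ : dist z z₀ < ρ₂ :=
        lt_of_lt_of_le (Metric.mem_ball.mp hz)
          (le_trans (min_le_right _ _) (min_le_left _ _))
      have := hρ₂ hzρ₂
      rwa [Complex.dist_eq] at this
    have hzne : z ≠ 0 := by
      intro h
      rw [h, zero_sub, norm_neg] at hd1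
      linarith
    refine ⟨hzne, ?_, ?_⟩
    · rw [Complex.mem_slitPlane_iff]
      left
      have hree : (z / z₀).re = 1 + ((z - z₀) / z₀).re := by
        rw [show z / z₀ = 1 + (z - z₀) / z₀ by field_simp; ring]
        simp [Complex.add_re]
      have habs : ‖(z - z₀) / z₀‖ < 1/2 := by
        rw [norm_div, div_lt_iff₀ hz₀abs]
        linarith
      have hre2 : |((z - z₀) / z₀).re| ≤ ‖(z - z₀) / z₀‖ :=
        Complex.abs_re_le_norm _
      rw [hree]
      have := abs_le.mp (le_of_lt (lt_of_le_of_lt hre2 habs))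
      linarith [this.1]
    · rw [Complex.mem_slitPlane_iff]
      left
      have hree : (f z / f z₀).re = 1 + ((f z - f z₀) / f z₀).re := by
        rw [show f z / f z₀ = 1 + (f z - f z₀) / f z₀ by field_simp; ring]
        simp [Complex.add_re]
      have habs : ‖(f z - f z₀) / f z₀‖ < 1/2 := by
        rw [norm_div, div_lt_iff₀ hfz₀abs]
        linarith
      have hre2 : |((f z - f z₀) / f z₀).re| ≤ ‖(f z - f z₀) / f z₀‖ :=
        Complex.abs_re_le_norm _
      rw [hree]
      have := abs_le.mp (le_of_lt (lt_of_le_of_lt hre2 habs))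
      linarith [this.1]
  set G : ℂ → ℂ := fun z => Complex.log (f z / f z₀) - (s:ℂ) * Complex.log (z / z₀)
    with hGdef
  have hGdiff : DifferentiableOn ℂ G (Metric.ball z₀ ρ) := by
    intro z hz
    obtain ⟨hzne, hzslit, hfslit⟩ := hballfacts z hz
    have hd1 : DifferentiableAt ℂ (fun z => Complex.log (f z / f z₀)) z :=
      (Complex.differentiableAt_log hfslit).comp (g := Complex.log) z
        ((hf.differentiableAt ((isOpen_ann r₁ R₁).mem_nhds (hballann hz))).div_const _)
    have hd2 : DifferentiableAt ℂ (fun z => Complex.log (z / z₀)) z :=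
      (Complex.differentiableAt_log hzslit).comp (g := Complex.log) z (differentiableAt_id.div_const _)
    exact (hd1.sub (hd2.const_mul _)).differentiableWithinAt
  have hGre : ∀ z ∈ Metric.ball z₀ ρ, (G z).re = 0 := by
    intro z hz
    obtain ⟨hzne, -, -⟩ := hballfacts z hz
    have hzann := hballann hz
    have hzabs : (0:ℝ) < ‖z‖ := h₁.trans hzann.1
    have hfzne : f z ≠ 0 := hfne z hzann
    have hfzabs : (0:ℝ) < ‖f z‖ := by
      simpa [norm_pos_iff] using hfzne
    have e1 : (Complex.log (f z / f z₀)).re =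
        Real.log (‖f z‖) - Real.log (‖f z₀‖) := by
      rw [Complex.log_re, norm_div, Real.log_div hfzabs.ne' hfz₀abs.ne']
    have e2 : (Complex.log (z / z₀)).re =
        Real.log (‖z‖) - Real.log (‖z₀‖) := by
      rw [Complex.log_re, norm_div, Real.log_div hzabs.ne' hz₀abs.ne']
    have e3 : ((s:ℂ) * Complex.log (z / z₀)).re = s * (Complex.log (z / z₀)).re := by
      simp [Complex.mul_re, Complex.ofReal_re, Complex.ofReal_im]
    have m1 : Real.log (‖f z‖) = a + s * Real.log (‖z‖) := by
      rw [hmod z hzann, Real.log_exp]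
    have m2 : Real.log (‖f z₀‖) = a + s * Real.log (‖z₀‖) := by
      rw [hmod z₀ hz₀, Real.log_exp]
    rw [hGdef]
    simp only [Complex.sub_re]
    rw [e1, e3, e2, m1, m2]
    ring
  -- G is constant (= 0) on the ball
  have hG0 : G z₀ = 0 := by
    rw [hGdef]
    simp only [div_self hfz₀ne, div_self hz₀ne, Complex.log_one, mul_zero, sub_zero]
  have hGconst : ∀ z ∈ Metric.ball z₀ ρ, G z = 0 := by
    have han : AnalyticOnNhd ℂ G (Metric.ball z₀ ρ) :=
      hGdiff.analyticOnNhd Metric.isOpen_ball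
    rcases han.is_constant_or_isOpen (convex_ball z₀ ρ).isPreconnected with ⟨w, hw⟩ | hop
    · intro z hz
      rw [hw z hz, ← hw z₀ (Metric.mem_ball_self hρpos), hG0]
    · exfalso
      have himg : IsOpen (G '' Metric.ball z₀ ρ) :=
        hop _ (subset_refl _) Metric.isOpen_ball
      have hmem : G z₀ ∈ G '' Metric.ball z₀ ρ :=
        ⟨z₀, Metric.mem_ball_self hρpos, rfl⟩
      obtain ⟨ε, hεpos, hε⟩ := Metric.isOpen_iff.mp himg _ hmem
      have hmem2 : G z₀ + (ε/2 : ℝ) ∈ G '' Metric.ball z₀ ρ := by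
        apply hε
        rw [Metric.mem_ball, Complex.dist_eq]
        simp only [add_sub_cancel_left]
        rw [Complex.norm_real, Real.norm_eq_abs, abs_of_pos (by positivity)]
        linarith
      obtain ⟨z, hzb, hzeq⟩ := hmem2
      have h1 : (G z).re = 0 := hGre z hzb
      have h2 : (G z₀).re = 0 := hGre z₀ (Metric.mem_ball_self hρpos)
      rw [hzeq] at h1
      simp only [Complex.add_re, Complex.ofReal_re, h2, zero_add] at h1
      linarith
  -- differentiate
  have hev : G =ᶠ[nhds z₀] fun _ => (0:ℂ) := by
    filter_upwards [Metric.isOpen_ball.mem_nhds (Metric.mem_ball_self hρpos)] with z hz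
    exact hGconst z hz
  have hGd0 : HasDerivAt G 0 z₀ := (hasDerivAt_const z₀ (0:ℂ)).congr_of_eventuallyEq hev
  have h1slit : f z₀ / f z₀ ∈ Complex.slitPlane := by
    rw [div_self hfz₀ne]; simp [Complex.mem_slitPlane_iff]
  have h2slit : z₀ / z₀ ∈ Complex.slitPlane := by
    rw [div_self hz₀ne]; simp [Complex.mem_slitPlane_iff]
  have hd1 : HasDerivAt (fun z => Complex.log (f z / f z₀))
      ((deriv f z₀ / f z₀) / (f z₀ / f z₀)) z₀ :=
    (hfda.hasDerivAt.div_const (f z₀)).clog h1slit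
  have hdin : HasDerivAt (fun z : ℂ => z / z₀) (1 / z₀) z₀ := (hasDerivAt_id z₀).div_const _
  have hd2 : HasDerivAt (fun z => Complex.log (z / z₀)) ((1 / z₀) / (z₀ / z₀)) z₀ :=
    hdin.clog h2slit
  have hGd : HasDerivAt G ((deriv f z₀ / f z₀) / (f z₀ / f z₀) -
      (s:ℂ) * ((1 / z₀) / (z₀ / z₀))) z₀ := hd1.sub (hd2.const_mul _)
  have heq := hGd0.unique hGd
  rw [div_self hfz₀ne, div_self hz₀ne] at heq
  simp only [div_one] at heq
  have h := heq.symm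
  field_simp at h
  linear_combination h

/-- Final step: from the logarithmic-derivative identity and injectivity, the exponent is 1. -/
lemma s_eq_one (h₁ : 0 < r₁) (h₁' : r₁ < R₁) {s : ℝ}
    (hf : DifferentiableOn ℂ f (ann r₁ R₁))
    (hinj : Set.InjOn f (ann r₁ R₁))
    (hfne : ∀ z ∈ ann r₁ R₁, f z ≠ 0)
    (hderiv : ∀ z ∈ ann r₁ R₁, z * deriv f z = (s:ℂ) * f z)
    (hs : 0 < s) : s = 1 := by
  set ρ : ℝ := (r₁ + R₁) / 2 with hρdef
  have hρpos : 0 < ρ := by rw [hρdef]; linarith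
  have hγmem : ∀ θ : ℝ, circleMap 0 ρ θ ∈ ann r₁ R₁ := by
    intro θ
    rw [ann, mem_setOf_eq, norm_circleMap_zero, abs_of_pos hρpos]
    constructor <;> [skip; skip] <;> rw [hρdef] <;> linarith
  set c : ℝ → ℂ := fun θ => f (circleMap 0 ρ θ) with hcdef
  have hcd : ∀ θ : ℝ, HasDerivAt c (I * s * c θ) θ := by
    intro θ
    have hfd : HasDerivAt f (deriv f (circleMap 0 ρ θ)) (circleMap 0 ρ θ) :=
      (hf.differentiableAt ((isOpen_ann r₁ R₁).mem_nhds (hγmem θ))).hasDerivAt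
    have hcomp : HasDerivAt (f ∘ circleMap 0 ρ)
        ((circleMap 0 ρ θ * I) • deriv f (circleMap 0 ρ θ)) θ :=
      hfd.scomp θ (hasDerivAt_circleMap 0 ρ θ)
    have heq : (circleMap 0 ρ θ * I) • deriv f (circleMap 0 ρ θ) = I * s * c θ := by
      have h := hderiv (circleMap 0 ρ θ) (hγmem θ)
      rw [smul_eq_mul, hcdef]
      calc circleMap 0 ρ θ * I * deriv f (circleMap 0 ρ θ)
          = I * (circleMap 0 ρ θ * deriv f (circleMap 0 ρ θ)) := by ring
        _ = I * ((s:ℂ) * f (circleMap 0 ρ θ)) := by rw [h]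
        _ = I * s * f (circleMap 0 ρ θ) := by ring
    rw [heq] at hcomp
    exact hcomp
  -- q is constant
  set q : ℝ → ℂ := fun θ => c θ * Complex.exp (-(I * s) * θ) with hqdef
  have hqd : ∀ θ : ℝ, HasDerivAt q 0 θ := by
    intro θ
    have hlin : HasDerivAt (fun θ : ℝ => -(I * (s:ℂ)) * (θ:ℂ)) (-(I * s)) θ := by
      have h0 : HasDerivAt (fun θ : ℝ => (θ:ℂ)) 1 θ := by
        simpa using (hasDerivAt_id θ).ofReal_comp
      simpa using h0.const_mul (-(I * (s:ℂ)))
    have hexp : HasDerivAt (fun θ : ℝ => Complex.exp (-(I * (s:ℂ)) * (θ:ℂ)))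
        (Complex.exp (-(I * (s:ℂ)) * (θ:ℂ)) * (-(I * s))) θ := hlin.cexp
    have := (hcd θ).mul hexp
    have heq0 : I * ↑s * c θ * Complex.exp (-(I * ↑s) * ↑θ) +
        c θ * (Complex.exp (-(I * ↑s) * ↑θ) * -(I * ↑s)) = 0 := by ring
    rw [heq0] at this
    exact this
  have hqconst : ∀ θ : ℝ, q θ = q 0 :=
    fun θ => is_const_of_deriv_eq_zero (fun x => (hqd x).differentiableAt)
      (fun x => (hqd x).deriv) θ 0
  have hc0ne : c 0 ≠ 0 := hfne _ (hγmem 0)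
  -- periodicity gives exp(-2πis) = 1
  have hper : c (2 * Real.pi) = c 0 := by
    have h := periodic_circleMap 0 ρ 0
    rw [zero_add] at h
    show f (circleMap 0 ρ (2 * Real.pi)) = f (circleMap 0 ρ 0)
    rw [h]
  have hq2π := hqconst (2 * Real.pi)
  rw [hqdef] at hq2π
  simp only [Complex.ofReal_zero, mul_zero, Complex.exp_zero, mul_one] at hq2π
  rw [hper] at hq2π
  have hexp1 : Complex.exp (-(I * s) * (2 * Real.pi : ℝ)) = 1 := by
    have := mul_left_cancel₀ hc0ne (hq2π.trans (mul_one (c 0)).symm)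
    exact this
  obtain ⟨n, hn⟩ := Complex.exp_eq_one_iff.mp hexp1
  -- conclude s is an integer
  have hIpi : (2 * (Real.pi:ℂ) * I) ≠ 0 := by
    simp [Real.pi_ne_zero, Complex.I_ne_zero]
  have hsn : (s:ℂ) = -(n:ℂ) := by
    have h2 : -(I * s) * ((2 * Real.pi : ℝ):ℂ) = (n:ℂ) * (2 * (Real.pi:ℂ) * I) := by
      exact_mod_cast hn
    have h3 : (-(s:ℂ)) * (2 * (Real.pi:ℂ) * I) = (n:ℂ) * (2 * (Real.pi:ℂ) * I) := by
      rw [← h2]; push_cast; ring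
    have := mul_right_cancel₀ hIpi h3
    linear_combination -this
  have hsn' : s = -(n:ℝ) := by exact_mod_cast hsn
  -- injectivity rules out s ≥ 2
  by_contra hs1
  have hnint : (1:ℝ) ≤ s := by
    have : (0:ℤ) < -n := by
      have : (0:ℝ) < -(n:ℝ) := by rw [← hsn']; exact hs
      exact_mod_cast this
    have h1 : (1:ℤ) ≤ -n := this
    have : (1:ℝ) ≤ -(n:ℝ) := by exact_mod_cast h1
    linarith [hsn'.ge, hsn'.le]
  have hs2 : 2 ≤ s := by
    rcases eq_or_lt_of_le hnint with h | h
    · exact absurd h.symm hs1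
    · have h2 : (1:ℤ) < -n := by
        have : (1:ℝ) < -(n:ℝ) := by rw [← hsn'] at *; linarith
        exact_mod_cast this
      have h3 : (2:ℤ) ≤ -n := h2
      have : (2:ℝ) ≤ -(n:ℝ) := by exact_mod_cast h3
      linarith [hsn'.le]
  set θ₂ : ℝ := 2 * Real.pi / s with hθ₂def
  have hθ₂pos : 0 < θ₂ := by
    apply div_pos (by positivity) hs
  have hθ₂lt : θ₂ < 2 * Real.pi := by
    rw [hθ₂def, div_lt_iff₀ hs]
    nlinarith [Real.pi_pos]
  -- c θ₂ = c 0
  have hcθ₂ : c θ₂ = c 0 := by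
    have h1 := hqconst θ₂
    rw [hqdef] at h1
    simp only [Complex.ofReal_zero, mul_zero, Complex.exp_zero, mul_one] at h1
    have h2 : Complex.exp (-(I * s) * θ₂) * Complex.exp (I * s * θ₂) = 1 := by
      rw [← Complex.exp_add]
      simp only [neg_mul]
      rw [show -(I * ↑s * ↑θ₂) + I * ↑s * ↑θ₂ = 0 by ring, Complex.exp_zero]
    have h3 : Complex.exp (I * (s:ℂ) * (θ₂:ℂ)) = 1 := by
      have hsne : (s:ℂ) ≠ 0 := by
        simp only [ne_eq, Complex.ofReal_eq_zero]
        exact hs.ne'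
      have hsθ : (s:ℂ) * (θ₂:ℂ) = 2 * Real.pi := by
        rw [hθ₂def]
        push_cast
        field_simp
      rw [show I * (s:ℂ) * (θ₂:ℂ) = (s:ℂ) * (θ₂:ℂ) * I by ring, hsθ]
      exact_mod_cast Complex.exp_two_pi_mul_I
    calc c θ₂ = c θ₂ * (Complex.exp (-(I * s) * θ₂) * Complex.exp (I * s * θ₂)) := by
          rw [h2, mul_one]
      _ = (c θ₂ * Complex.exp (-(I * s) * θ₂)) * Complex.exp (I * s * θ₂) := by ring
      _ = c 0 * Complex.exp (I * s * θ₂) := by rw [h1]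
      _ = c 0 * 1 := by rw [h3]
      _ = c 0 := mul_one _
  -- injectivity contradiction
  have hγeq : circleMap 0 ρ θ₂ = circleMap 0 ρ 0 :=
    hinj (hγmem θ₂) (hγmem 0) hcθ₂
  simp only [circleMap, Complex.ofReal_zero, zero_mul, Complex.exp_zero, mul_one,
    zero_add] at hγeq
  have hργ : Complex.exp ((θ₂:ℂ) * I) = 1 := by
    have hρne : ((ρ:ℝ):ℂ) ≠ 0 := by
      simp only [ne_eq, Complex.ofReal_eq_zero]
      exact hρpos.ne'
    exact mul_left_cancel₀ hρne (hγeq.trans (mul_one ((ρ:ℝ):ℂ)).symm)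
  obtain ⟨m, hm⟩ := Complex.exp_eq_one_iff.mp hργ
  have hθ₂m : (θ₂:ℝ) = m * (2 * Real.pi) := by
    have h2 : (θ₂:ℂ) * I = (m:ℂ) * (2 * (Real.pi:ℂ) * I) := by exact_mod_cast hm
    have h3 : (θ₂:ℂ) * I = ((m:ℝ) * (2 * Real.pi) : ℝ) * I := by
      rw [h2]; push_cast; ring
    have h4 := mul_right_cancel₀ Complex.I_ne_zero h3
    exact_mod_cast h4
  have hπ := Real.pi_pos
  rcases le_or_gt (m:ℝ) 0 with hm0 | hm0
  · nlinarith
  · have hm1 : (1:ℤ) ≤ m := by exact_mod_cast (by exact_mod_cast hm0 : (0:ℤ) < m)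
    have : (1:ℝ) ≤ (m:ℝ) := by exact_mod_cast hm1
    nlinarith

lemma main_caseA (h₁ : 0 < r₁) (h₁' : r₁ < R₁) (h₂ : 0 < r₂) (h₂' : r₂ < R₂)
    (hf : DifferentiableOn ℂ f (ann r₁ R₁))
    (hbij : Set.BijOn f (ann r₁ R₁) (ann r₂ R₂))
    {δ₀ : ℝ} (hδ₀ : 0 < δ₀)
    (hcaseA : ∀ z ∈ ann r₁ R₁, ‖z‖ < r₁ + δ₀ →
      ‖f z‖ < (r₂ + R₂) / 2) :
    R₁ / r₁ = R₂ / r₂ := by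
  set s : ℝ := (Real.log R₂ - Real.log r₂) / (Real.log R₁ - Real.log r₁) with hsdef
  have hL1 : Real.log r₁ < Real.log R₁ := Real.log_lt_log h₁ h₁'
  have hL2 : Real.log r₂ < Real.log R₂ := Real.log_lt_log h₂ h₂'
  have hs : 0 < s := div_pos (by linarith) (by linarith)
  have hmod := modulus_eq h₁ h₁' h₂ h₂' hf hbij hδ₀ hcaseA
  have hmod' : ∀ z ∈ ann r₁ R₁, ‖f z‖ =
      Real.exp ((Real.log r₂ - s * Real.log r₁) + s * Real.log (‖z‖)) := by
    intro z hz
    rw [hmod z hz]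
    congr 1
    ring
  have hfne : ∀ z ∈ ann r₁ R₁, f z ≠ 0 := by
    intro z hz h
    have := (hbij.mapsTo hz).1
    rw [h] at this
    simp at this
    linarith
  have hderiv := deriv_identity h₁ h₁' hf hfne hmod'
  have hs1 : s = 1 := s_eq_one h₁ h₁' hf hbij.injOn hfne hderiv hs
  have heq : Real.log R₂ - Real.log r₂ = Real.log R₁ - Real.log r₁ := by
    have h := hs1
    rw [hsdef, div_eq_one_iff_eq (by linarith)] at h
    exact h
  have h1 : Real.log (R₁ / r₁) = Real.log (R₂ / r₂) := by
    rw [Real.log_div (by linarith) h₁.ne', Real.log_div (by linarith) h₂.ne']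
    linarith
  have h2 : (0:ℝ) < R₁ / r₁ := div_pos (h₁.trans h₁') h₁
  have h3 : (0:ℝ) < R₂ / r₂ := div_pos (h₂.trans h₂') h₂
  calc R₁ / r₁ = Real.exp (Real.log (R₁ / r₁)) := (Real.exp_log h2).symm
    _ = Real.exp (Real.log (R₂ / r₂)) := by rw [h1]
    _ = R₂ / r₂ := Real.exp_log h3

lemma inner_dichotomy (h₁ : 0 < r₁) (h₁' : r₁ < R₁) (h₂ : 0 < r₂) (h₂' : r₂ < R₂)
    (hf : DifferentiableOn ℂ f (ann r₁ R₁))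
    (hbij : Set.BijOn f (ann r₁ R₁) (ann r₂ R₂)) :
    ∃ δ > 0, (∀ z ∈ ann r₁ R₁, ‖z‖ < r₁ + δ →
        ‖f z‖ < (r₂ + R₂) / 2) ∨
      (∀ z ∈ ann r₁ R₁, ‖z‖ < r₁ + δ →
        (r₂ + R₂) / 2 < ‖f z‖) := by
  have hc₀1 : r₂ < (r₂ + R₂)/2 := by linarith
  have hc₀2 : (r₂ + R₂)/2 < R₂ := by linarith
  obtain ⟨δc, hδcpos, hδcav⟩ := avoid h₁ h₁' h₂ h₂' hf hbij hc₀1 hc₀2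
  set δ : ℝ := min δc ((R₁ - r₁)/2) with hδdef
  have hδpos : 0 < δ := lt_min hδcpos (by linarith)
  have hδ1 : δ ≤ δc := min_le_left _ _
  have hδ2 : δ ≤ (R₁ - r₁)/2 := min_le_right _ _
  set S : Set ℂ := ann r₁ (r₁ + δ) with hSdef
  have hSsub : S ⊆ ann r₁ R₁ := fun z hz => ⟨hz.1, by have := hz.2; linarith⟩
  have hSav : ∀ z ∈ S, ‖f z‖ ≠ (r₂ + R₂)/2 := by
    intro z hz heq
    have := (hδcav z (hSsub hz) heq).1
    have h2 := hz.2
    linarith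
  rcases side (isPreconnected_ann h₁.le) hSsub hf.continuousOn hSav with h | h
  · exact ⟨δ, hδpos, Or.inl fun z hz hlt => h z ⟨hz.1, hlt⟩⟩
  · exact ⟨δ, hδpos, Or.inr fun z hz hlt => h z ⟨hz.1, hlt⟩⟩

theorem main (h₁ : 0 < r₁) (h₁' : r₁ < R₁) (h₂ : 0 < r₂) (h₂' : r₂ < R₂)
    (hf : DifferentiableOn ℂ f (ann r₁ R₁))
    (hbij : Set.BijOn f (ann r₁ R₁) (ann r₂ R₂)) :
    R₁ / r₁ = R₂ / r₂ := by
  obtain ⟨δ, hδpos, hcase⟩ := inner_dichotomy h₁ h₁' h₂ h₂' hf hbij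
  rcases hcase with hA | hB
  · exact main_caseA h₁ h₁' h₂ h₂' hf hbij hδpos hA
  · -- compose with the inversion w ↦ r₂R₂/w
    have hfne : ∀ z ∈ ann r₁ R₁, f z ≠ 0 := by
      intro z hz h
      have := (hbij.mapsTo hz).1
      rw [h] at this
      simp at this
      linarith
    set C : ℝ := r₂ * R₂ with hCdef
    have hCpos : 0 < C := mul_pos h₂ (h₂.trans h₂')
    set ι : ℂ → ℂ := fun w => (C:ℂ) / w with hιdef
    have hιmaps : ∀ w ∈ ann r₂ R₂, ι w ∈ ann r₂ R₂ := by
      intro w hw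
      have hw1 := hw.1
      have hw2 := hw.2
      have hwpos : 0 < ‖w‖ := h₂.trans hw1
      have habs : ‖ι w‖ = C / ‖w‖ := by
        rw [hιdef]
        simp only [norm_div, Complex.norm_real, Real.norm_eq_abs, abs_of_pos hCpos]
      constructor
      · rw [habs, lt_div_iff₀ hwpos, hCdef]
        nlinarith
      · rw [habs, div_lt_iff₀ hwpos, hCdef]
        nlinarith
    have hιinv : ∀ w ∈ ann r₂ R₂, ι (ι w) = w := by
      intro w hw
      have hwne : w ≠ 0 := by
        intro h
        rw [h] at hw
        simp [ann] at hw
        linarith [hw.1]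
      have hCne : ((C:ℝ):ℂ) ≠ 0 := by
        simp only [ne_eq, Complex.ofReal_eq_zero]
        exact hCpos.ne'
      rw [hιdef]
      simp only []
      rw [div_div_eq_mul_div, mul_comm, mul_div_assoc, div_self hCne, mul_one]
    have hιbij : Set.BijOn ι (ann r₂ R₂) (ann r₂ R₂) := by
      refine ⟨fun w hw => hιmaps w hw, ?_, ?_⟩
      · intro w hw w' hw' heq
        have := congrArg ι heq
        rwa [hιinv w hw, hιinv w' hw'] at this
      · intro w hw
        exact ⟨ι w, hιmaps w hw, hιinv w hw⟩
    set f' : ℂ → ℂ := fun z => ι (f z) with hf'def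
    have hf'diff : DifferentiableOn ℂ f' (ann r₁ R₁) := by
      apply DifferentiableOn.div (differentiableOn_const _) hf hfne
    have hf'bij : Set.BijOn f' (ann r₁ R₁) (ann r₂ R₂) := hιbij.comp hbij
    have hf'case : ∀ z ∈ ann r₁ R₁, ‖z‖ < r₁ + δ →
        ‖f' z‖ < (r₂ + R₂) / 2 := by
      intro z hz hlt
      have h1 := hB z hz hlt
      have hfpos : 0 < ‖f z‖ := h₂.trans (hbij.mapsTo hz).1
      have habs : ‖f' z‖ = C / ‖f z‖ := by
        rw [hf'def, hιdef]
        simp only [norm_div, Complex.norm_real, Real.norm_eq_abs, abs_of_pos hCpos]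
      rw [habs, div_lt_iff₀ hfpos, hCdef]
      nlinarith
    exact main_caseA h₁ h₁' h₂ h₂' hf'diff hf'bij hδpos hf'case

end AnnulusProof


theorem annuli_conformally_equivalent_iff_same_modulus
    (r₁ R₁ r₂ R₂ : ℝ) (h₁ : 0 < r₁) (h₁' : r₁ < R₁) (h₂ : 0 < r₂) (h₂' : r₂ < R₂)
    (f : ℂ → ℂ)
    (hf : DifferentiableOn ℂ f {z : ℂ | r₁ < ‖z‖ ∧ ‖z‖ < R₁})
    (hbij : Set.BijOn f {z : ℂ | r₁ < ‖z‖ ∧ ‖z‖ < R₁}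
      {z : ℂ | r₂ < ‖z‖ ∧ ‖z‖ < R₂}) :
    R₁ / r₁ = R₂ / r₂ :=
  main h₁ h₁' h₂ h₂' hf hbij
end
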